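/- If t ∈ T' is not a scalar matrix and t fixes an unordered pair {Q₁, Q₂} of distinct points of ℙ¹(F) (setwise), then t² is a scalar matrix; in other words, the stabilizer in T'/F^* of any unordered pair of distinct points of ℙ¹(F) has order at most 2. -/

import Mathlib

open Matrix CategoryTheory CategoryTheory.Limits Pointwise
open scoped LinearAlgebra.Projectivization

noncomputable section

/-- The projective line over a field `K`, as the projectivization of `K²`. -/
abbrev P1 (K : Type*) [Field K] := ℙ K (Fin 2 → K)

namespace P1

variable {K : Type*} [Field K]

lemma mulVec_ne_zero (g : GL (Fin 2) K) {v : Fin 2 → K} (hv : v ≠ 0) :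
    (g : Matrix (Fin 2) (Fin 2) K) *ᵥ v ≠ 0 := by
  intro h
  apply hv
  have h2 := congrArg (fun w => ((g⁻¹ : GL (Fin 2) K) : Matrix (Fin 2) (Fin 2) K) *ᵥ w) h
  simp only [Matrix.mulVec_mulVec] at h2
  rw [Units.inv_mul, Matrix.one_mulVec, Matrix.mulVec_zero] at h2
  exact h2

/-- The natural action of `GL₂(K)` on the projective line `ℙ¹(K)`. -/
instance : SMul (GL (Fin 2) K) (P1 K) :=
  ⟨fun g x => Projectivization.mk K ((g : Matrix (Fin 2) (Fin 2) K) *ᵥ x.rep)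
    (mulVec_ne_zero g x.rep_nonzero)⟩

lemma smul_mk (g : GL (Fin 2) K) (v : Fin 2 → K) (hv : v ≠ 0) :
    g • Projectivization.mk K v hv
      = Projectivization.mk K ((g : Matrix (Fin 2) (Fin 2) K) *ᵥ v) (mulVec_ne_zero g hv) := by
  show Projectivization.mk K _ _ = _
  rw [Projectivization.mk_eq_mk_iff]
  obtain ⟨a, ha⟩ := Projectivization.exists_smul_eq_mk_rep K v hv
  exact ⟨a, by rw [← ha]; simp [Matrix.mulVec_smul]⟩

instance : MulAction (GL (Fin 2) K) (P1 K) where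
  one_smul x := by
    induction x using Projectivization.ind with
    | h v hv => rw [smul_mk]; simp
  mul_smul g h x := by
    induction x using Projectivization.ind with
    | h v hv => rw [smul_mk, smul_mk, smul_mk]; simp only [Units.val_mul, Matrix.mulVec_mulVec]

end P1

section Setup

variable (F : Type*) [Field F] (F' : Type*) [Field F'] [Algebra F F']

/-- The inclusion `GL₂(F) → GL₂(F')` induced by the inclusion `F ⊆ F'`. -/
def glMap : GL (Fin 2) F →* GL (Fin 2) F' :=
  Matrix.GeneralLinearGroup.map (algebraMap F F')

/-- The scalar matrices, as a homomorphism `Fˣ →* GL₂(F)`. -/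
def scalarGL : Fˣ →* GL (Fin 2) F :=
  Units.map (Matrix.scalar (Fin 2)).toMonoidHom

variable {F F'}

/-- The (semilinear) action of a field automorphism `σ ∈ Gal(F'/F)` on `ℙ¹(F')`. -/
def sigmaPt (σ : F' ≃ₐ[F] F') (x : P1 F') : P1 F' :=
  Projectivization.mk F' (fun i => σ (x.rep i))
    (fun h => x.rep_nonzero (funext fun i => σ.injective (by simpa using congrFun h i)))

variable (F F')

/-- The set of `F`-rational points `ℙ¹(F) ⊆ ℙ¹(F')`. -/
def ratPts : Set (P1 F') :=
  Set.range (fun x : P1 F =>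
    Projectivization.mk F' (fun i => algebraMap F F' (x.rep i))
      (fun h => x.rep_nonzero (funext fun i =>
        (algebraMap F F').injective (by simpa using congrFun h i))))

/-- A Borel subgroup of `GL₂(F)`: the stabilizer of a point `∞ ∈ ℙ¹(F)`. -/
def Bsub (xoo : P1 F) : Subgroup (GL (Fin 2) F) :=
  MulAction.stabilizer (GL (Fin 2) F) xoo

/-- A split maximal torus of `GL₂(F)`: the pointwise stabilizer of `{0, ∞} ⊆ ℙ¹(F)`. -/
def Tsub (x0 xoo : P1 F) : Subgroup (GL (Fin 2) F) :=
  MulAction.stabilizer (GL (Fin 2) F) x0 ⊓ MulAction.stabilizer (GL (Fin 2) F) xoo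

/-- The setwise stabilizer of `{0, ∞} ⊆ ℙ¹(F)` in `GL₂(F)`. -/
def Nsub (x0 xoo : P1 F) : Subgroup (GL (Fin 2) F) :=
  MulAction.stabilizer (GL (Fin 2) F) ({x0, xoo} : Set (P1 F))

/-- A nonsplit maximal torus of `GL₂(F)`: the stabilizer in `GL₂(F)` of a point
`P ∈ ℙ¹(F') ∖ ℙ¹(F)`. -/
def T'sub (P : P1 F') : Subgroup (GL (Fin 2) F) :=
  (MulAction.stabilizer (GL (Fin 2) F') P).comap (glMap F F')

/-- The setwise stabilizer in `GL₂(F)` of the pair `{P, σP}`, for `P ∈ ℙ¹(F') ∖ ℙ¹(F)`. -/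
def N'sub (σ : F' ≃ₐ[F] F') (P : P1 F') : Subgroup (GL (Fin 2) F) :=
  (MulAction.stabilizer (GL (Fin 2) F') ({P, sigmaPt σ P} : Set (P1 F'))).comap (glMap F F')

end Setup

section Helpers

variable {K : Type*} [Field K]

lemma fixed_eigen (g : GL (Fin 2) K) {x : P1 K} (h : g • x = x) :
    ∃ a : Kˣ, (g : Matrix (Fin 2) (Fin 2) K) *ᵥ x.rep = (a : K) • x.rep := by
  have h' : Projectivization.mk K ((g : Matrix (Fin 2) (Fin 2) K) *ᵥ x.rep)
      (P1.mulVec_ne_zero g x.rep_nonzero) = Projectivization.mk K x.rep x.rep_nonzero :=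
    h.trans x.mk_rep.symm
  rw [Projectivization.mk_eq_mk_iff] at h'
  obtain ⟨a, ha⟩ := h'
  exact ⟨a, ha.symm⟩

lemma indep_of_ne {v w : Fin 2 → K} (hv : v ≠ 0) (hw : w ≠ 0)
    (h : Projectivization.mk K v hv ≠ Projectivization.mk K w hw) :
    LinearIndependent K ![v, w] := by
  rw [LinearIndependent.pair_iff' hv]
  intro a ha
  rcases eq_or_ne a 0 with rfl | ha0
  · exact hw (by simpa using ha.symm)
  · refine h ((Projectivization.mk_eq_mk_iff K v w hv hw).mpr ⟨(Units.mk0 a ha0)⁻¹, ?_⟩)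
    rw [← ha, Units.smul_def]
    simp [smul_smul, inv_mul_cancel₀ ha0]

lemma eq_of_smul_rep {x y : P1 K} {a : K} (ha : a ≠ 0) (h : a • y.rep = x.rep) : x = y := by
  rw [← x.mk_rep, ← y.mk_rep, Projectivization.mk_eq_mk_iff]
  exact ⟨Units.mk0 a ha, by simpa [Units.smul_def] using h⟩

lemma three_fixed (g : GL (Fin 2) K) {x y z : P1 K}
    (hxy : x ≠ y) (hxz : x ≠ z) (hyz : y ≠ z)
    (hx : g • x = x) (hy : g • y = y) (hz : g • z = z) :
    ∃ c : Kˣ, (g : Matrix (Fin 2) (Fin 2) K) = (c : K) • 1 := by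
  obtain ⟨a, ha⟩ := fixed_eigen g hx
  obtain ⟨b, hb⟩ := fixed_eigen g hy
  obtain ⟨c, hc⟩ := fixed_eigen g hz
  have hxy' : Projectivization.mk K x.rep x.rep_nonzero
      ≠ Projectivization.mk K y.rep y.rep_nonzero := by
    rwa [x.mk_rep, y.mk_rep]
  have hli : LinearIndependent K ![x.rep, y.rep] := indep_of_ne _ _ hxy'
  have hcard : Fintype.card (Fin 2) = Module.finrank K (Fin 2 → K) := by simp
  let B := basisOfLinearIndependentOfCardEqFinrank hli hcard
  have hB0 : B 0 = x.rep := by simp [B, coe_basisOfLinearIndependentOfCardEqFinrank]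
  have hB1 : B 1 = y.rep := by simp [B, coe_basisOfLinearIndependentOfCardEqFinrank]
  have hu : z.rep = B.repr z.rep 0 • x.rep + B.repr z.rep 1 • y.rep := by
    have := B.sum_repr z.rep
    rw [Fin.sum_univ_two, hB0, hB1] at this
    exact this.symm
  have hr0 : B.repr z.rep 0 ≠ 0 := by
    intro h0
    rw [h0, zero_smul, zero_add] at hu
    have hr1 : B.repr z.rep 1 ≠ 0 := by
      intro h1
      rw [h1, zero_smul] at hu
      exact z.rep_nonzero hu
    exact hyz (eq_of_smul_rep hr1 hu.symm).symm
  have hr1 : B.repr z.rep 1 ≠ 0 := by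
    intro h1
    rw [h1, zero_smul, add_zero] at hu
    exact hxz (eq_of_smul_rep hr0 hu.symm).symm
  have hMu : (B.repr z.rep 0 * (a : K)) • x.rep + (B.repr z.rep 1 * (b : K)) • y.rep
      = ((c : K) * B.repr z.rep 0) • x.rep + ((c : K) * B.repr z.rep 1) • y.rep := by
    have h1 : (g : Matrix (Fin 2) (Fin 2) K) *ᵥ z.rep
        = (B.repr z.rep 0 * (a : K)) • x.rep + (B.repr z.rep 1 * (b : K)) • y.rep := by
      conv_lhs => rw [hu]
      rw [Matrix.mulVec_add, Matrix.mulVec_smul, Matrix.mulVec_smul, ha, hb,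
        smul_smul, smul_smul]
    have h2 : (g : Matrix (Fin 2) (Fin 2) K) *ᵥ z.rep
        = ((c : K) * B.repr z.rep 0) • x.rep + ((c : K) * B.repr z.rep 1) • y.rep := by
      rw [hc]
      conv_lhs => rw [hu]
      rw [smul_add, smul_smul, smul_smul]
    rw [← h1, h2]
  have hpair := LinearIndependent.pair_iff.mp hli
  have h0 : (B.repr z.rep 0 * (a : K) - (c : K) * B.repr z.rep 0) • x.rep
      + (B.repr z.rep 1 * (b : K) - (c : K) * B.repr z.rep 1) • y.rep = 0 := by
    rw [sub_smul, sub_smul, sub_add_sub_comm, hMu, sub_self]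
  obtain ⟨e1, e2⟩ := hpair _ _ h0
  have hac : (a : K) = (c : K) :=
    mul_left_cancel₀ hr0 (by linear_combination sub_eq_zero.mp e1)
  have hbc : (b : K) = (c : K) :=
    mul_left_cancel₀ hr1 (by linear_combination sub_eq_zero.mp e2)
  refine ⟨c, ?_⟩
  have hlin : (g : Matrix (Fin 2) (Fin 2) K).mulVecLin
      = ((c : K) • LinearMap.id : (Fin 2 → K) →ₗ[K] (Fin 2 → K)) := by
    apply B.ext
    intro i
    fin_cases i
    · simp only [Fin.zero_eta, Fin.mk_one, hB0, Matrix.mulVecLin_apply, LinearMap.smul_apply,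
        LinearMap.id_apply]
      rw [ha, hac]
    · simp only [Fin.zero_eta, Fin.mk_one, hB1, Matrix.mulVecLin_apply, LinearMap.smul_apply,
        LinearMap.id_apply]
      rw [hb, hbc]
  ext i j
  have := congrFun (congrArg (fun (f : (Fin 2 → K) →ₗ[K] (Fin 2 → K)) => f (Pi.single j 1)) hlin) i
  simp only [Matrix.mulVecLin_apply, LinearMap.smul_apply, LinearMap.id_apply] at this
  rw [Matrix.mulVec_single] at this
  simp only [Pi.smul_apply, MulOpposite.op_one, one_smul, Matrix.col_apply] at this
  rw [this]
  by_cases hij : i = j <;> simp [hij, Matrix.one_apply, Pi.single_apply, eq_comm]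

end Helpers

section Iota

variable {F : Type*} [Field F] {F' : Type*} [Field F'] [Algebra F F']

/-- The embedding `ℙ¹(F) → ℙ¹(F')`. -/
def iota (x : P1 F) : P1 F' :=
  Projectivization.mk F' (fun i => algebraMap F F' (x.rep i))
    (fun h => x.rep_nonzero (funext fun i =>
      (algebraMap F F').injective (by simpa using congrFun h i)))

lemma mem_ratPts_iff {P : P1 F'} : P ∈ ratPts F F' ↔ ∃ x : P1 F, iota x = P :=
  Iff.rfl

lemma iota_mk (v : Fin 2 → F) (hv : v ≠ 0) :
    iota (Projectivization.mk F v hv)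
      = Projectivization.mk F' (fun i => algebraMap F F' (v i))
        (fun h => hv (funext fun i =>
          (algebraMap F F').injective (by simpa using congrFun h i))) := by
  rw [iota, Projectivization.mk_eq_mk_iff]
  obtain ⟨a, ha⟩ := Projectivization.exists_smul_eq_mk_rep F v hv
  refine ⟨Units.map (algebraMap F F').toMonoidHom a, funext fun i => ?_⟩
  have := congrFun ha i
  simp only [Pi.smul_apply, Units.smul_def, smul_eq_mul] at this ⊢
  rw [← this]
  simp

lemma iota_smul (g : GL (Fin 2) F) (x : P1 F) :
    iota (g • x) = glMap F F' g • (iota x : P1 F') := by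
  conv_lhs => rw [← x.mk_rep]
  rw [P1.smul_mk, iota_mk]
  conv_rhs => rw [iota]
  rw [P1.smul_mk]
  apply Projectivization.mk_eq_mk_iff _ _ _ _ _ |>.mpr
  refine ⟨1, funext fun i => ?_⟩
  simp only [one_smul]
  have hcoe : ((glMap F F' g : GL (Fin 2) F') : Matrix (Fin 2) (Fin 2) F')
      = (g : Matrix (Fin 2) (Fin 2) F).map (algebraMap F F') := rfl
  rw [hcoe]
  exact (RingHom.map_mulVec (algebraMap F F') _ _ i).symm

lemma iota_injective : Function.Injective (iota (F := F) (F' := F')) := by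
  intro x y h
  rw [iota, iota, Projectivization.mk_eq_mk_iff] at h
  obtain ⟨a, ha⟩ := h
  obtain ⟨j, hj⟩ : ∃ j, y.rep j ≠ 0 := by
    by_contra hc
    push_neg at hc
    exact y.rep_nonzero (funext hc)
  have haj := congrFun ha j
  simp only [Pi.smul_apply, Units.smul_def, smul_eq_mul] at haj
  set b := x.rep j / y.rep j with hbdef
  have hfj : algebraMap F F' (y.rep j) ≠ 0 :=
    fun h => hj ((algebraMap F F').injective (by simpa using h))
  have hab : (a : F') = algebraMap F F' b := by
    rw [hbdef, map_div₀, eq_div_iff hfj]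
    exact haj
  have hxy : b • y.rep = x.rep := by
    funext i
    have hai := congrFun ha i
    simp only [Pi.smul_apply, Units.smul_def, smul_eq_mul] at hai
    rw [hab] at hai
    apply (algebraMap F F').injective
    simpa using hai
  have hb0 : b ≠ 0 := by
    intro h0
    apply x.rep_nonzero
    rw [← hxy, h0, zero_smul]
  rw [← x.mk_rep, ← y.mk_rep, Projectivization.mk_eq_mk_iff]
  exact ⟨Units.mk0 b hb0, hxy⟩

end Iota

/-- If `t ∈ T'` is not scalar and fixes an unordered pair of distinct
points of `ℙ¹(F)` setwise, then `t²` is a scalar matrix. -/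
theorem statement19 {F : Type*} [Field F] [Fintype F] {F' : Type*} [Field F'] [Algebra F F']
    (hdim : Module.finrank F F' = 2)
    (P : P1 F') (hP : P ∉ ratPts F F')
    (t : GL (Fin 2) F) (ht : t ∈ T'sub F F' P) (hns : ¬ ∃ c : Fˣ, t = scalarGL F c)
    (Q1 Q2 : P1 F) (hQ : Q1 ≠ Q2)
    (hfix : (t • Q1 = Q1 ∧ t • Q2 = Q2) ∨ (t • Q1 = Q2 ∧ t • Q2 = Q1)) :
    ∃ c : Fˣ, t ^ 2 = scalarGL F c := by
  have htP : glMap F F' t • P = P := ht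
  have hg2 : glMap F F' (t ^ 2) = glMap F F' t * glMap F F' t := by rw [sq]; exact _root_.map_mul (glMap F F') t t
  have hP2 : glMap F F' (t ^ 2) • P = P := by rw [hg2, mul_smul, htP, htP]
  have hQ1' : glMap F F' (t ^ 2) • (iota Q1 : P1 F') = iota Q1 := by
    rw [hg2, mul_smul, ← iota_smul, ← iota_smul]
    rcases hfix with ⟨h1, _⟩ | ⟨h1, h2⟩
    · rw [h1, h1]
    · rw [h1, h2]
  have hQ2' : glMap F F' (t ^ 2) • (iota Q2 : P1 F') = iota Q2 := by
    rw [hg2, mul_smul, ← iota_smul, ← iota_smul]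
    rcases hfix with ⟨_, h2⟩ | ⟨h1, h2⟩
    · rw [h2, h2]
    · rw [h2, h1]
  have hne1 : (iota Q1 : P1 F') ≠ iota Q2 := fun h => hQ (iota_injective h)
  have hne2 : (iota Q1 : P1 F') ≠ P := fun h => hP ⟨Q1, h⟩
  have hne3 : (iota Q2 : P1 F') ≠ P := fun h => hP ⟨Q2, h⟩
  obtain ⟨c, hc⟩ := three_fixed (glMap F F' (t ^ 2)) hne1 hne2 hne3 hQ1' hQ2' hP2
  have hcoe : ((glMap F F' (t ^ 2) : GL (Fin 2) F') : Matrix (Fin 2) (Fin 2) F')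
      = ((t ^ 2 : GL (Fin 2) F) : Matrix (Fin 2) (Fin 2) F).map (algebraMap F F') := rfl
  rw [hcoe] at hc
  set A := ((t ^ 2 : GL (Fin 2) F) : Matrix (Fin 2) (Fin 2) F) with hA
  have entry : ∀ i j, algebraMap F F' (A i j) = (c : F') * (if i = j then 1 else 0) := by
    intro i j
    have := congrFun (congrFun hc i) j
    simpa [Matrix.map_apply, Matrix.smul_apply, Matrix.one_apply, smul_eq_mul] using this
  have e00 : algebraMap F F' (A 0 0) = (c : F') := by simpa using entry 0 0
  have e11 : algebraMap F F' (A 1 1) = (c : F') := by simpa using entry 1 1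
  have e01 : A 0 1 = 0 := by
    apply (algebraMap F F').injective
    simpa using entry 0 1
  have e10 : A 1 0 = 0 := by
    apply (algebraMap F F').injective
    simpa using entry 1 0
  have ediag : A 1 1 = A 0 0 := (algebraMap F F').injective (by rw [e00, e11])
  have hd0 : A 0 0 ≠ 0 := by
    intro h
    have : (c : F') = 0 := by rw [← e00, h, map_zero]
    exact c.ne_zero this
  refine ⟨Units.mk0 (A 0 0) hd0, ?_⟩
  apply Units.ext
  show A = _
  have hsc : ((scalarGL F (Units.mk0 (A 0 0) hd0) : GL (Fin 2) F) : Matrix (Fin 2) (Fin 2) F)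
      = Matrix.scalar (Fin 2) (A 0 0) := rfl
  rw [hsc]
  ext i j
  fin_cases i <;> fin_cases j <;>
    simp [Matrix.scalar_apply, Matrix.diagonal, e01, e10, ediag]

end
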